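/- Let β ∈ ℂ, δ > 0, C > 0 and μ ∈ ℝ with μ > Im β. Suppose f : (0,δ) → ℂ is continuous with |f(t)| ≤ C t^μ for all t ∈ (0,δ). Then for every x ∈ (0,δ) the integral u(x) := i x^{−iβ} ∫₀^x f(t) t^{iβ−1} dt converges absolutely, u is differentiable on (0,δ) with −i x u'(x) + β u(x) = f(x) for all x ∈ (0,δ), and |u(x)| ≤ C x^μ / (μ − Im β) for all x ∈ (0,δ). -/

import Mathlib

open MeasureTheory intervalIntegral

/-- The particular solution `u(x) = i x^{-iβ} ∫₀ˣ f(t) t^{iβ-1} dt` of the transport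
equation `-i x u' + β u = f`, with real powers written via `exp` and `log`. -/
noncomputable def transportSolution (β : ℂ) (f : ℝ → ℂ) (x : ℝ) : ℂ :=
  Complex.I * Complex.exp (-(Complex.I * β) * (Real.log x : ℂ)) *
    ∫ t in (0:ℝ)..x, f t * Complex.exp ((Complex.I * β - 1) * (Real.log t : ℂ))

theorem transport_equation_particular_solution (β : ℂ) (δ C μ : ℝ)
    (hδ : 0 < δ) (hC : 0 < C) (hμ : β.im < μ)
    (f : ℝ → ℂ) (hf : ContinuousOn f (Set.Ioo 0 δ))
    (hbound : ∀ t ∈ Set.Ioo (0:ℝ) δ, ‖f t‖ ≤ C * t ^ μ) :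
    (∀ x ∈ Set.Ioo (0:ℝ) δ,
      IntervalIntegrable
        (fun t => f t * Complex.exp ((Complex.I * β - 1) * (Real.log t : ℂ)))
        MeasureTheory.volume 0 x) ∧
    (∀ x ∈ Set.Ioo (0:ℝ) δ, ∃ d : ℂ,
      HasDerivAt (transportSolution β f) d x ∧
      -Complex.I * (x : ℂ) * d + β * transportSolution β f x = f x) ∧
    (∀ x ∈ Set.Ioo (0:ℝ) δ,
      ‖transportSolution β f x‖ ≤ C * x ^ μ / (μ - β.im)) := by
  set g : ℝ → ℂ := fun t => f t * Complex.exp ((Complex.I * β - 1) * (Real.log t : ℂ)) with hgdef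
  have hν : (-1:ℝ) < μ - β.im - 1 := by linarith
  -- norm of the exponential factor
  have hnexp : ∀ t : ℝ, 0 < t →
      ‖Complex.exp ((Complex.I * β - 1) * (Real.log t : ℂ))‖ = t ^ (-β.im - 1) := by
    intro t ht
    rw [Complex.norm_exp, Real.rpow_def_of_pos ht]
    congr 1
    simp [Complex.mul_re, Complex.sub_re, Complex.sub_im, Complex.mul_im,
      Complex.I_re, Complex.I_im]
    ring
  -- norm bound on g
  have hgnorm : ∀ t ∈ Set.Ioo (0:ℝ) δ, ‖g t‖ ≤ C * t ^ (μ - β.im - 1) := by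
    intro t ht
    rw [hgdef]
    simp only [norm_mul]
    rw [hnexp t ht.1]
    calc ‖f t‖ * t ^ (-β.im - 1) ≤ (C * t ^ μ) * t ^ (-β.im - 1) := by
          exact mul_le_mul_of_nonneg_right (hbound t ht) (Real.rpow_nonneg ht.1.le _)
      _ = C * t ^ (μ - β.im - 1) := by
          rw [mul_assoc, ← Real.rpow_add ht.1]
          ring_nf
  -- continuity of g on (0, δ)
  have hexpcont : ContinuousOn
      (fun t : ℝ => Complex.exp ((Complex.I * β - 1) * (Real.log t : ℂ))) (Set.Ioo 0 δ) := by
    apply Complex.continuous_exp.comp_continuousOn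
    exact continuousOn_const.mul
      (Complex.continuous_ofReal.comp_continuousOn
        (Real.continuousOn_log.mono (fun t ht => ne_of_gt ht.1)))
  have hgcont : ContinuousOn g (Set.Ioo 0 δ) := hf.mul hexpcont
  -- Part 1: interval integrability
  have hint : ∀ x ∈ Set.Ioo (0:ℝ) δ, IntervalIntegrable g volume 0 x := by
    intro x hx
    have hIsub : Set.Ioc (0:ℝ) x ⊆ Set.Ioo 0 δ := fun t ht => ⟨ht.1, lt_of_le_of_lt ht.2 hx.2⟩
    have huIoc : Set.uIoc (0:ℝ) x = Set.Ioc 0 x := Set.uIoc_of_le hx.1.le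
    have hbase : IntervalIntegrable (fun t : ℝ => C * t ^ (μ - β.im - 1)) volume 0 x :=
      (intervalIntegral.intervalIntegrable_rpow' hν).const_mul C
    apply hbase.mono_fun
    · rw [huIoc]
      exact ((hgcont.mono hIsub).aestronglyMeasurable measurableSet_Ioc)
    · rw [huIoc, Filter.EventuallyLE, ae_restrict_iff' measurableSet_Ioc]
      refine Filter.Eventually.of_forall (fun t ht => ?_)
      have := hgnorm t (hIsub ht)
      calc ‖g t‖ ≤ C * t ^ (μ - β.im - 1) := this
        _ ≤ ‖C * t ^ (μ - β.im - 1)‖ := le_abs_self _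
  refine ⟨hint, ?_, ?_⟩
  · -- Part 2: derivative
    intro x hx
    have hx0 : (0:ℝ) < x := hx.1
    have hxC : (x:ℂ) ≠ 0 := by exact_mod_cast hx0.ne'
    set L : ℂ := (Real.log x : ℂ) with hL
    set A : ℂ := Complex.exp (-(Complex.I * β) * L) with hA
    -- derivative of the exponential prefactor
    have hlog : HasDerivAt (fun y : ℝ => ((Real.log y : ℝ) : ℂ)) ((x⁻¹ : ℝ) : ℂ) x :=
      (Real.hasDerivAt_log hx0.ne').ofReal_comp
    have hE : HasDerivAt (fun y : ℝ => Complex.exp (-(Complex.I * β) * (Real.log y : ℂ)))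
        (A * (-(Complex.I * β) * ((x⁻¹ : ℝ) : ℂ))) x := by
      have h1 : HasDerivAt (fun y : ℝ => -(Complex.I * β) * (Real.log y : ℂ))
          (-(Complex.I * β) * ((x⁻¹ : ℝ) : ℂ)) x := hlog.const_mul _
      simpa [hA, hL, mul_comm] using h1.cexp
    -- derivative of the integral
    have hF : HasDerivAt (fun y : ℝ => ∫ t in (0:ℝ)..y, g t) (g x) x := by
      refine intervalIntegral.integral_hasDerivAt_right (hint x hx) ?_ ?_
      · exact hgcont.stronglyMeasurableAtFilter isOpen_Ioo x hx
      · exact hgcont.continuousAt (isOpen_Ioo.mem_nhds hx)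
    have hu : HasDerivAt (transportSolution β f)
        ((Complex.I * (A * (-(Complex.I * β) * ((x⁻¹ : ℝ) : ℂ)))) * (∫ t in (0:ℝ)..x, g t)
          + (Complex.I * A) * g x) x := (hE.const_mul Complex.I).mul hF
    refine ⟨_, hu, ?_⟩
    -- the algebraic identity
    have key : (x:ℂ) * (A * Complex.exp ((Complex.I * β - 1) * L)) = 1 := by
      rw [hA, ← Complex.exp_add]
      have h2 : -(Complex.I * β) * L + (Complex.I * β - 1) * L = -L := by ring
      rw [h2, hL, ← Complex.ofReal_neg, ← Complex.ofReal_exp, Real.exp_neg,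
        Real.exp_log hx0]
      exact_mod_cast mul_inv_cancel₀ hx0.ne'
    have hxinv : (x:ℂ) * ((x⁻¹ : ℝ) : ℂ) = 1 := by
      exact_mod_cast mul_inv_cancel₀ hx0.ne'
    have hIsq : Complex.I * Complex.I = -1 := Complex.I_mul_I
    have hts : transportSolution β f x = Complex.I * A * ∫ t in (0:ℝ)..x, g t := rfl
    have hgx : g x = f x * Complex.exp ((Complex.I * β - 1) * L) := rfl
    rw [hts, hgx]
    set G : ℂ := ∫ t in (0:ℝ)..x, g t with hG
    set e : ℂ := Complex.exp ((Complex.I * β - 1) * L) with he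
    linear_combination
      (Complex.I * β * A * G * (x:ℂ) * ((x⁻¹ : ℝ) : ℂ) - f x * (x:ℂ) * A * e) * hIsq
      + (-(Complex.I * β * A * G)) * hxinv + f x * key
  · -- Part 3: the bound
    intro x hx
    have hx0 : (0:ℝ) < x := hx.1
    have hIsub : Set.Ioc (0:ℝ) x ⊆ Set.Ioo 0 δ := fun t ht => ⟨ht.1, lt_of_le_of_lt ht.2 hx.2⟩
    have hbase : IntervalIntegrable (fun t : ℝ => C * t ^ (μ - β.im - 1)) volume 0 x :=
      (intervalIntegral.intervalIntegrable_rpow' hν).const_mul C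
    have hle : ‖∫ t in (0:ℝ)..x, g t‖ ≤ |∫ t in (0:ℝ)..x, C * t ^ (μ - β.im - 1)| := by
      apply intervalIntegral.norm_integral_le_abs_of_norm_le _ hbase
      rw [Set.uIoc_of_le hx0.le, ae_restrict_iff' measurableSet_Ioc]
      exact Filter.Eventually.of_forall (fun t ht => hgnorm t (hIsub ht))
    have hival : (∫ t in (0:ℝ)..x, C * t ^ (μ - β.im - 1)) = C * x ^ (μ - β.im) / (μ - β.im) := by
      rw [intervalIntegral.integral_const_mul, integral_rpow (Or.inl hν)]
      have h1 : μ - β.im - 1 + 1 = μ - β.im := by ring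
      rw [h1, Real.zero_rpow (by linarith : μ - β.im ≠ 0)]
      ring
    have habs : |∫ t in (0:ℝ)..x, C * t ^ (μ - β.im - 1)| = C * x ^ (μ - β.im) / (μ - β.im) := by
      rw [hival, abs_of_nonneg]
      exact div_nonneg (mul_nonneg hC.le (Real.rpow_nonneg hx0.le _)) (by linarith)
    have hnormu : ‖transportSolution β f x‖
        = x ^ β.im * ‖∫ t in (0:ℝ)..x, g t‖ := by
      rw [transportSolution]
      simp only [norm_mul, Complex.norm_I, one_mul]
      congr 1
      rw [Complex.norm_exp, Real.rpow_def_of_pos hx0]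
      congr 1
      simp [Complex.mul_re, Complex.neg_re, Complex.neg_im, Complex.mul_im,
        Complex.I_re, Complex.I_im]
      ring
    rw [hnormu]
    calc x ^ β.im * ‖∫ t in (0:ℝ)..x, g t‖
        ≤ x ^ β.im * (C * x ^ (μ - β.im) / (μ - β.im)) := by
          refine mul_le_mul_of_nonneg_left ?_ (Real.rpow_nonneg hx0.le _)
          rw [← habs]; exact hle
      _ = C * x ^ μ / (μ - β.im) := by
          have hxx : x ^ β.im * x ^ (μ - β.im) = x ^ μ := by
            rw [← Real.rpow_add hx0]; ring_nf
          rw [← hxx]; ring
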